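/- For the instance m = 3 with receivers {1}, {2}, {3}: liminf over k → ∞ of α_k equals 2, while α_3 ≤ log 7 / log 3 < 2. Hence inf_k α_k < liminf_{k→∞} α_k, i.e., the optimal finite-alphabet rate is strictly smaller than the asymptotic rate. -/

import Mathlib

/-- The very-pliable decoding condition for the instance with `m = 3` messages over
alphabet `Fin k` and three receivers, receiver `i` knowing only message `i`. -/
def IsVPCode3 (k t : ℕ) (E : (Fin 3 → Fin k) → Fin t) : Prop :=
  ∀ (i : Fin 3) (c : Fin t) (a : Fin k),
    ∃ j ≠ i, ∃ v : Fin k, ∀ x : Fin 3 → Fin k, E x = c → x i = a → x j = v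

/-- The optimal very-pliable rate `α_k` for this instance. -/
noncomputable def alpha3 (k : ℕ) : ℝ :=
  sInf {r : ℝ | ∃ (t : ℕ) (E : (Fin 3 → Fin k) → Fin t),
    IsVPCode3 k t E ∧ r = Real.log (t : ℝ) / Real.log (k : ℝ)}


lemma fin3_cases (p q : Fin 3) (hp : p ≠ 0) (hq : q ≠ 0) (hpq : p ≠ q) (j : Fin 3) :
    j = 0 ∨ j = p ∨ j = q := by
  have h0 := j.isLt; have h1 := p.isLt; have h2 := q.isLt
  have e1 : p.val ≠ 0 := fun h => hp (Fin.ext h)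
  have e2 : q.val ≠ 0 := fun h => hq (Fin.ext h)
  have e3 : p.val ≠ q.val := fun h => hpq (Fin.ext h)
  rcases show j.val = 0 ∨ j.val = p.val ∨ j.val = q.val by omega with h | h | h
  exacts [Or.inl (Fin.ext h), Or.inr (Or.inl (Fin.ext h)), Or.inr (Or.inr (Fin.ext h))]

lemma fin3_funext {k : ℕ} (p q : Fin 3) (hp : p ≠ 0) (hq : q ≠ 0) (hpq : p ≠ q)
    {x y : Fin 3 → Fin k} (h0 : x 0 = y 0) (h1 : x p = y p) (h2 : x q = y q) : x = y := by
  funext i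
  rcases fin3_cases p q hp hq hpq i with h | h | h <;> subst h <;> assumption

/-- Key injectivity lemma: the union of "big" slices (in direction 0) whose
`p`-coordinate is constant injects into `Fin k` via the `q`-coordinate. -/
lemma inj_part {k : ℕ} (S : Finset (Fin 3 → Fin k))
    (H : ∀ (i : Fin 3) (a : Fin k), ∃ j, j ≠ i ∧ ∃ v, ∀ x ∈ S, x i = a → x j = v)
    (p q : Fin 3) (hp : p ≠ 0) (hq : q ≠ 0) (hpq : p ≠ q)
    (Q : Fin k → Prop) [DecidablePred Q]
    (hbig : ∀ a, Q a → 2 ≤ (S.filter (fun x => x 0 = a)).card)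
    (hconst : ∀ a, Q a → ∀ x ∈ S, ∀ y ∈ S, x 0 = a → y 0 = a → x p = y p) :
    (S.filter (fun x => Q (x 0))).card ≤ k := by
  classical
  have claimA : ∀ a, Q a → ∀ y ∈ S, y 0 = a → ∀ x ∈ S, x p = y p → x 0 = a := by
    intro a ha y hyS hy0 x hxS hxp
    obtain ⟨j, hj, w, hw⟩ := H p (y p)
    rcases fin3_cases p q hp hq hpq j with h | h | h
    · -- j = 0 : all elements with p-coord = y p have 0-coord = w = a
      rw [h] at hw
      have hya : y 0 = w := hw y hyS rfl
      have := hw x hxS hxp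
      rw [this, ← hya, hy0]
    · exact absurd h hj
    · -- j = q : then the slice at a is a single point, contradicting hbig
      exfalso
      rw [h] at hw
      have hcard : (S.filter (fun x => x 0 = a)).card ≤ 1 := by
        apply Finset.card_le_one.2
        intro u hu v hv
        simp only [Finset.mem_filter] at hu hv
        have hup : u p = y p := hconst a ha u hu.1 y hyS hu.2 hy0
        have hvp : v p = y p := hconst a ha v hv.1 y hyS hv.2 hy0
        exact fin3_funext p q hp hq hpq (hu.2.trans hv.2.symm)
          (hup.trans hvp.symm) ((hw u hu.1 hup).trans (hw v hv.1 hvp).symm)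
      exact absurd ((hbig a ha).trans hcard) (by norm_num)
  have key : ((S.filter (fun x => Q (x 0)))).card ≤ (Finset.univ : Finset (Fin k)).card := by
    apply Finset.card_le_card_of_injOn (fun x => x q) (fun x _ => Finset.mem_univ _)
    intro x hx y hy hxy
    simp only [Finset.coe_filter, Set.mem_setOf_eq] at hx hy
    obtain ⟨hxS, hQx⟩ := hx; obtain ⟨hyS, hQy⟩ := hy
    have hab : y 0 = x 0 := by
      obtain ⟨j, hj, w, hw⟩ := H q (x q)
      rcases fin3_cases p q hp hq hpq j with h | h | h
      · rw [h] at hw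
        rw [hw y hyS hxy.symm, hw x hxS rfl]
      · -- j = p : then y p = x p, so claimA applies
        rw [h] at hw
        have : y p = x p := (hw y hyS hxy.symm).trans (hw x hxS rfl).symm
        exact claimA (x 0) hQx x hxS rfl y hyS this
      · exact absurd h hj
    have hpp : x p = y p := hconst (x 0) hQx x hxS y hyS rfl hab
    exact fin3_funext p q hp hq hpq hab.symm hpp hxy
  simpa using key

/-- Every "fiber" with the very-pliable slice property has at most `3 * k` elements. -/
lemma fiber_card_le {k : ℕ} (S : Finset (Fin 3 → Fin k))
    (H : ∀ (i : Fin 3) (a : Fin k), ∃ j, j ≠ i ∧ ∃ v, ∀ x ∈ S, x i = a → x j = v) :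
    S.card ≤ 3 * k := by
  classical
  set Q0 : Fin k → Prop := fun a => (S.filter (fun x => x 0 = a)).card ≤ 1 with hQ0
  set Q1 : Fin k → Prop := fun a => ¬ Q0 a ∧ ∃ v, ∀ x ∈ S, x 0 = a → x 1 = v with hQ1
  set Q2 : Fin k → Prop := fun a => ¬ Q0 a ∧ ¬ ∃ v, ∀ x ∈ S, x 0 = a → x 1 = v with hQ2
  have hcover : ∀ a : Fin k, Q0 a ∨ Q1 a ∨ Q2 a := by
    intro a
    by_cases h0 : Q0 a
    · exact Or.inl h0
    by_cases h1 : ∃ v, ∀ x ∈ S, x 0 = a → x 1 = v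
    · exact Or.inr (Or.inl ⟨h0, h1⟩)
    · exact Or.inr (Or.inr ⟨h0, h1⟩)
  have hsub : S ⊆ (S.filter fun x => Q0 (x 0)) ∪ ((S.filter fun x => Q1 (x 0)) ∪ (S.filter fun x => Q2 (x 0))) := by
    intro x hx
    rcases hcover (x 0) with h | h | h
    · exact Finset.mem_union_left _ (Finset.mem_filter.2 ⟨hx, h⟩)
    · exact Finset.mem_union_right _ (Finset.mem_union_left _ (Finset.mem_filter.2 ⟨hx, h⟩))
    · exact Finset.mem_union_right _ (Finset.mem_union_right _ (Finset.mem_filter.2 ⟨hx, h⟩))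
  have c0 : (S.filter fun x => Q0 (x 0)).card ≤ k := by
    have key : (S.filter fun x => Q0 (x 0)).card ≤ (Finset.univ : Finset (Fin k)).card := by
      apply Finset.card_le_card_of_injOn (fun x => x 0) (fun x _ => Finset.mem_univ _)
      intro x hx y hy hxy
      simp only [Finset.coe_filter, Set.mem_setOf_eq] at hx hy
      have hxm : x ∈ S.filter (fun z => z 0 = x 0) := Finset.mem_filter.2 ⟨hx.1, rfl⟩
      have hym : y ∈ S.filter (fun z => z 0 = x 0) := Finset.mem_filter.2 ⟨hy.1, hxy.symm⟩
      exact Finset.card_le_one.1 hx.2 x hxm y hym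
    simpa using key
  have c1 : (S.filter fun x => Q1 (x 0)).card ≤ k := by
    have hb : ∀ a, Q1 a → 2 ≤ (S.filter (fun x => x 0 = a)).card := by
      intro a ha
      exact not_le.mp (by simpa only [hQ0] using ha.1)
    have hc : ∀ a, Q1 a → ∀ x ∈ S, ∀ y ∈ S, x 0 = a → y 0 = a → x 1 = y 1 := by
      intro a ha x hx y hy hx0 hy0
      obtain ⟨v, hv⟩ := ha.2
      rw [hv x hx hx0, hv y hy hy0]
    exact inj_part S H 1 2 (by decide) (by decide) (by decide) Q1 hb hc
  have c2 : (S.filter fun x => Q2 (x 0)).card ≤ k := by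
    have hb : ∀ a, Q2 a → 2 ≤ (S.filter (fun x => x 0 = a)).card := by
      intro a ha
      exact not_le.mp (by simpa only [hQ0] using ha.1)
    have hc : ∀ a, Q2 a → ∀ x ∈ S, ∀ y ∈ S, x 0 = a → y 0 = a → x 2 = y 2 := by
      intro a ha x hx y hy hx0 hy0
      obtain ⟨j, hj, v, hv⟩ := H 0 a
      rcases fin3_cases 1 2 (by decide) (by decide) (by decide) j with h | h | h
      · exact absurd h hj
      · rw [h] at hv
        exact absurd ⟨v, hv⟩ ha.2
      · rw [h] at hv
        rw [hv x hx hx0, hv y hy hy0]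
    exact inj_part S H 2 1 (by decide) (by decide) (by decide) Q2 hb hc
  calc S.card ≤ _ := Finset.card_le_card hsub
    _ ≤ (S.filter fun x => Q0 (x 0)).card + ((S.filter fun x => Q1 (x 0)) ∪ (S.filter fun x => Q2 (x 0))).card := Finset.card_union_le _ _
    _ ≤ (S.filter fun x => Q0 (x 0)).card + ((S.filter fun x => Q1 (x 0)).card + (S.filter fun x => Q2 (x 0)).card) := by
        exact Nat.add_le_add_left (Finset.card_union_le _ _) _
    _ ≤ k + (k + k) := add_le_add c0 (add_le_add c1 c2)
    _ = 3 * k := by ring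

/-- Counting lower bound: any very-pliable code satisfies `k² ≤ 3t`. -/
lemma code_lb {k t : ℕ} (hk : 1 ≤ k) (E : (Fin 3 → Fin k) → Fin t)
    (hE : IsVPCode3 k t E) : k ^ 2 ≤ 3 * t := by
  classical
  have hfib : ∀ c : Fin t,
      ((Finset.univ : Finset (Fin 3 → Fin k)).filter (fun x => E x = c)).card ≤ 3 * k := by
    intro c
    apply fiber_card_le
    intro i a
    obtain ⟨j, hj, v, hv⟩ := hE i c a
    refine ⟨j, hj, v, fun x hx hxi => ?_⟩
    simp only [Finset.mem_filter] at hx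
    exact hv x hx.2 hxi
  have hsum : (Finset.univ : Finset (Fin 3 → Fin k)).card
      = ∑ c : Fin t, ((Finset.univ : Finset (Fin 3 → Fin k)).filter (fun x => E x = c)).card :=
    Finset.card_eq_sum_card_fiberwise (fun x _ => Finset.mem_univ (E x))
  have hcard : (Finset.univ : Finset (Fin 3 → Fin k)).card = k ^ 3 := by
    simp [Finset.card_univ]
  have h1 : k ^ 3 ≤ t * (3 * k) := by
    calc k ^ 3 = _ := hcard.symm
      _ = _ := hsum
      _ ≤ ∑ _c : Fin t, 3 * k := Finset.sum_le_sum (fun c _ => hfib c)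
      _ = t * (3 * k) := by simp [Finset.sum_const, mul_comm]
  have h2 : k ^ 2 * k ≤ (3 * t) * k := by
    calc k ^ 2 * k = k ^ 3 := by ring
      _ ≤ t * (3 * k) := h1
      _ = (3 * t) * k := by ring
  exact Nat.le_of_mul_le_mul_right h2 (by omega)

/-- Construction: a very-pliable code with `t = k²`. -/
lemma code_ub {k : ℕ} (hk : 2 ≤ k) :
    ∃ E : (Fin 3 → Fin k) → Fin (k * k), IsVPCode3 k (k * k) E := by
  haveI : NeZero k := ⟨by omega⟩
  refine ⟨fun x => finProdFinEquiv (x 0 + x 1, x 1 + x 2), ?_⟩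
  intro i c a
  have hdec : ∀ x : Fin 3 → Fin k,
      finProdFinEquiv (x 0 + x 1, x 1 + x 2) = c →
      x 0 + x 1 = (finProdFinEquiv.symm c).1 ∧ x 1 + x 2 = (finProdFinEquiv.symm c).2 := by
    intro x hx
    have := congrArg finProdFinEquiv.symm hx
    rw [Equiv.symm_apply_apply] at this
    rw [← this]
    exact ⟨rfl, rfl⟩
  fin_cases i
  · refine ⟨1, by decide, (finProdFinEquiv.symm c).1 - a, fun x hx hxa => ?_⟩
    have hxa' : x 0 = a := hxa
    have h := (hdec x hx).1
    rw [hxa'] at h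
    exact eq_sub_of_add_eq' h
  · refine ⟨0, by decide, (finProdFinEquiv.symm c).1 - a, fun x hx hxa => ?_⟩
    have hxa' : x 1 = a := hxa
    have h := (hdec x hx).1
    rw [hxa'] at h
    exact eq_sub_of_add_eq h
  · refine ⟨1, by decide, (finProdFinEquiv.symm c).2 - a, fun x hx hxa => ?_⟩
    have hxa' : x 2 = a := hxa
    have h := (hdec x hx).2
    rw [hxa'] at h
    exact eq_sub_of_add_eq h

def E7 : (Fin 3 → Fin 3) → Fin 7 := fun x =>
  ![0,0,0,1,2,3,1,4,5,5,1,1,5,2,3,6,4,6,2,6,2,4,6,4,3,3,5]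
    ⟨9*(x 0).val+3*(x 1).val+(x 2).val, by
      have := (x 0).isLt; have := (x 1).isLt; have := (x 2).isLt; omega⟩

theorem E7_vp : IsVPCode3 3 7 E7 := by unfold IsVPCode3; decide

section analysis

lemma log_nat_pos {k : ℕ} (hk : 2 ≤ k) : (0:ℝ) < Real.log k :=
  Real.log_pos (by exact_mod_cast hk)

lemma mem_two {k : ℕ} (hk : 2 ≤ k) :
    (2:ℝ) ∈ {r : ℝ | ∃ (t : ℕ) (E : (Fin 3 → Fin k) → Fin t),
      IsVPCode3 k t E ∧ r = Real.log (t : ℝ) / Real.log (k : ℝ)} := by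
  obtain ⟨E, hE⟩ := code_ub hk
  refine ⟨k * k, E, hE, ?_⟩
  have hk0 : (k:ℝ) ≠ 0 := by positivity
  have hl := log_nat_pos hk
  rw [Nat.cast_mul, Real.log_mul hk0 hk0]
  field_simp
  ring

lemma mem_ge {k : ℕ} (hk : 2 ≤ k) {r : ℝ}
    (hr : r ∈ {r : ℝ | ∃ (t : ℕ) (E : (Fin 3 → Fin k) → Fin t),
      IsVPCode3 k t E ∧ r = Real.log (t : ℝ) / Real.log (k : ℝ)}) :
    2 - Real.log 3 / Real.log k ≤ r := by
  obtain ⟨t, E, hE, rfl⟩ := hr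
  have hlk := log_nat_pos hk
  have h3t : ((k:ℝ))^2 ≤ 3 * t := by exact_mod_cast code_lb (by omega) E hE
  have hk4 : (4:ℝ) ≤ (k:ℝ)^2 := by
    have : (2:ℝ) ≤ (k:ℝ) := by exact_mod_cast hk
    nlinarith
  have htpos : (0:ℝ) < t := by nlinarith
  have hdivle : ((k:ℝ))^2 / 3 ≤ (t:ℝ) := by linarith
  have hlog : Real.log ((k:ℝ)^2 / 3) ≤ Real.log t :=
    Real.log_le_log (by positivity) hdivle
  have heq : Real.log ((k:ℝ)^2 / 3) = 2 * Real.log k - Real.log 3 := by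
    rw [Real.log_div (by positivity) (by norm_num), Real.log_pow]
    push_cast; ring
  rw [heq] at hlog
  have h2 : (2 * Real.log k - Real.log 3) / Real.log k
      ≤ Real.log t / Real.log k := by
    exact div_le_div_of_nonneg_right hlog hlk.le
  calc 2 - Real.log 3 / Real.log k
      = (2 * Real.log k - Real.log 3) / Real.log k := by field_simp
    _ ≤ _ := h2

lemma mem_nonneg {k : ℕ} (hk : 2 ≤ k) {r : ℝ}
    (hr : r ∈ {r : ℝ | ∃ (t : ℕ) (E : (Fin 3 → Fin k) → Fin t),
      IsVPCode3 k t E ∧ r = Real.log (t : ℝ) / Real.log (k : ℝ)}) :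
    0 ≤ r := by
  have := mem_ge hk hr
  have hlk := log_nat_pos hk
  have hlog3 : Real.log 3 ≤ 2 * Real.log k := by
    have h1 : (3:ℝ) ≤ (k:ℝ)^2 := by
      have : (2:ℝ) ≤ (k:ℝ) := by exact_mod_cast hk
      nlinarith
    have := Real.log_le_log (by norm_num) h1
    rwa [Real.log_pow, Nat.cast_ofNat] at this
  have : Real.log 3 / Real.log k ≤ 2 := by
    rw [div_le_iff₀ hlk]; linarith
  linarith

lemma alpha_lb {k : ℕ} (hk : 2 ≤ k) : 2 - Real.log 3 / Real.log k ≤ alpha3 k :=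
  le_csInf ⟨2, mem_two hk⟩ (fun _ hb => mem_ge hk hb)

lemma alpha_ub {k : ℕ} (hk : 2 ≤ k) : alpha3 k ≤ 2 :=
  csInf_le ⟨0, fun _ hb => mem_nonneg hk hb⟩ (mem_two hk)

lemma alpha_nonneg {k : ℕ} (hk : 2 ≤ k) : 0 ≤ alpha3 k :=
  le_csInf ⟨2, mem_two hk⟩ (fun _ hb => mem_nonneg hk hb)

lemma alpha_tendsto : Filter.Tendsto (fun k : ℕ => alpha3 k) Filter.atTop (nhds 2) := by
  have h1 : Filter.Tendsto (fun k : ℕ => Real.log 3 / Real.log k) Filter.atTop (nhds 0) :=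
    Filter.Tendsto.div_atTop tendsto_const_nhds
      (Real.tendsto_log_atTop.comp tendsto_natCast_atTop_atTop)
  have h2 : Filter.Tendsto (fun k : ℕ => 2 - Real.log 3 / Real.log k) Filter.atTop (nhds 2) := by
    simpa using tendsto_const_nhds.sub h1
  refine tendsto_of_tendsto_of_tendsto_of_le_of_le' h2 tendsto_const_nhds ?_ ?_
  · exact Filter.eventually_atTop.2 ⟨2, fun k hk => alpha_lb hk⟩
  · exact Filter.eventually_atTop.2 ⟨2, fun k hk => alpha_ub hk⟩

lemma alpha_liminf : Filter.liminf (fun k : ℕ => alpha3 k) Filter.atTop = 2 :=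
  alpha_tendsto.liminf_eq

lemma alpha3_le : alpha3 3 ≤ Real.log 7 / Real.log 3 :=
  csInf_le ⟨0, fun _ hb => mem_nonneg (by norm_num) hb⟩
    ⟨7, E7, E7_vp, by norm_num⟩

lemma log73_lt : Real.log 7 / Real.log 3 < 2 := by
  have h3 : (0:ℝ) < Real.log 3 := Real.log_pos (by norm_num)
  rw [div_lt_iff₀ h3]
  have h9 : Real.log 7 < Real.log 9 := Real.log_lt_log (by norm_num) (by norm_num)
  have : Real.log 9 = 2 * Real.log 3 := by
    rw [show (9:ℝ) = 3^2 by norm_num, Real.log_pow]; push_cast; ring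
  linarith

end analysis

theorem stmt_10 :
    Filter.liminf (fun k : ℕ => alpha3 k) Filter.atTop = 2 ∧
    alpha3 3 ≤ Real.log 7 / Real.log 3 ∧
    Real.log 7 / Real.log 3 < 2 ∧
    (⨅ k : {k : ℕ // 2 ≤ k}, alpha3 k) < Filter.liminf (fun k : ℕ => alpha3 k) Filter.atTop := by
  refine ⟨alpha_liminf, alpha3_le, log73_lt, ?_⟩
  rw [alpha_liminf]
  have hbdd : BddBelow (Set.range fun k : {k : ℕ // 2 ≤ k} => alpha3 k) := by
    refine ⟨0, ?_⟩
    rintro r ⟨⟨k, hk⟩, rfl⟩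
    exact alpha_nonneg hk
  calc (⨅ k : {k : ℕ // 2 ≤ k}, alpha3 k) ≤ alpha3 3 := ciInf_le hbdd ⟨3, by norm_num⟩
    _ ≤ Real.log 7 / Real.log 3 := alpha3_le
    _ < 2 := log73_lt
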